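/- arXiv:1910.05948 — 4 statements merged into one kernel-verified Lean document; each statement's English description precedes it below -/
import Mathlib

section
/- Let $A$ be an $m\times m$ complex matrix, $B$ an $m\times 1$ complex matrix, $C$ a $1\times m$ complex matrix, $L$ an $m\times 1$ complex matrix, and $\tau\in\mathbb{R}$. Set $\bar A = A - e^{\tau A} L C e^{-\tau A}$. Fix $s\in\mathbb{C}$ with $\mathrm{Re}(s)\ge 0$, and assume both $\det(sI-\bar A)\neq 0$ and $\det\begin{pmatrix} sI-A & B \\ C e^{-\tau A} & 0\end{pmatrix}\neq 0$. Then the scalar $r(s) = C e^{-\tau A}(sI-\bar A)^{-1}B$ is nonzero. -/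
open Matrix NormedSpace

/-- Lemma 1 of the paper: nonvanishing of the scalar transfer function
`r(s) = C e^{-τA}(sI - Ā)⁻¹ B` in the closed right half-plane. -/
theorem stmt2 (m : ℕ) (A : Matrix (Fin m) (Fin m) ℂ) (B : Matrix (Fin m) (Fin 1) ℂ)
    (C : Matrix (Fin 1) (Fin m) ℂ) (L : Matrix (Fin m) (Fin 1) ℂ) (τ : ℝ) (s : ℂ)
    (Abar : Matrix (Fin m) (Fin m) ℂ)
    (hAbar : Abar = A - exp ((τ : ℂ) • A) * L * C * exp (-(τ : ℂ) • A))
    (hs : 0 ≤ s.re)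
    (hdet1 : (s • (1 : Matrix (Fin m) (Fin m) ℂ) - Abar).det ≠ 0)
    (hdet2 : (fromBlocks (s • (1 : Matrix (Fin m) (Fin m) ℂ) - A) B
        (C * exp (-(τ : ℂ) • A)) (0 : Matrix (Fin 1) (Fin 1) ℂ)).det ≠ 0) :
    (C * exp (-(τ : ℂ) • A) * (s • (1 : Matrix (Fin m) (Fin m) ℂ) - Abar)⁻¹ * B) 0 0 ≠ 0 := by
  set M : Matrix (Fin m) (Fin m) ℂ := s • (1 : Matrix (Fin m) (Fin m) ℂ) - Abar with hM
  set C' : Matrix (Fin 1) (Fin m) ℂ := C * exp (-(τ : ℂ) • A) with hC'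
  set X : Matrix (Fin m) (Fin 1) ℂ := exp ((τ : ℂ) • A) * L with hX
  have hMeq : M = (s • (1 : Matrix (Fin m) (Fin m) ℂ) - A) + X * C' := by
    have h : X * C' = X * C * exp (-(τ : ℂ) • A) := by rw [hC']; exact (Matrix.mul_assoc X C _).symm
    rw [hM, hAbar, ← h]
    abel
  -- row operation: multiply by unit block-triangular matrix
  have hmul : fromBlocks (1 : Matrix (Fin m) (Fin m) ℂ) X 0 (1 : Matrix (Fin 1) (Fin 1) ℂ) *
      fromBlocks (s • (1 : Matrix (Fin m) (Fin m) ℂ) - A) B C' 0 =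
      fromBlocks M B C' 0 := by
    rw [fromBlocks_multiply, hMeq]
    congr 1 <;> simp
  have hdet3 : (fromBlocks M B C' (0 : Matrix (Fin 1) (Fin 1) ℂ)).det ≠ 0 := by
    rw [← hmul, det_mul, det_fromBlocks_zero₂₁]
    simpa using hdet2
  letI : Invertible M := M.invertibleOfIsUnitDet (isUnit_iff_ne_zero.mpr hdet1)
  rw [det_fromBlocks₁₁, invOf_eq_nonsing_inv] at hdet3
  have h4 : ((0 : Matrix (Fin 1) (Fin 1) ℂ) - C' * M⁻¹ * B).det ≠ 0 :=
    fun h => hdet3 (by rw [h, mul_zero])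
  rw [det_fin_one] at h4
  intro h
  apply h4
  simp [h]
end

section
/- Let $A_0$ be an $n\times n$ complex matrix, $B_0$ an $n\times 1$ complex matrix, $C_0$ a $1\times n$ complex matrix, and $F_0$ a $1\times n$ complex matrix. Set $\hat A_0 = A_0 - B_0 F_0$. Fix $s\in\mathbb{C}$ with $\mathrm{Re}(s)\ge 0$, and assume both $\det(sI-\hat A_0)\neq 0$ and $\det\begin{pmatrix} sI-A_0 & B_0 \\ C_0 & 0\end{pmatrix}\neq 0$. Then the scalar $W_0(s) = C_0(sI-\hat A_0)^{-1}B_0$ is nonzero. -/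
open Matrix

/-- Nonvanishing of `W₀(s) = C₀(sI - Â₀)⁻¹ B₀` in the closed right half-plane. -/
theorem stmt3 (n : ℕ) (A0 : Matrix (Fin n) (Fin n) ℂ) (B0 : Matrix (Fin n) (Fin 1) ℂ)
    (C0 : Matrix (Fin 1) (Fin n) ℂ) (F0 : Matrix (Fin 1) (Fin n) ℂ) (s : ℂ)
    (Ahat : Matrix (Fin n) (Fin n) ℂ) (hAhat : Ahat = A0 - B0 * F0)
    (hs : 0 ≤ s.re)
    (hdet1 : (s • (1 : Matrix (Fin n) (Fin n) ℂ) - Ahat).det ≠ 0)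
    (hdet2 : (fromBlocks (s • (1 : Matrix (Fin n) (Fin n) ℂ) - A0) B0
        C0 (0 : Matrix (Fin 1) (Fin 1) ℂ)).det ≠ 0) :
    (C0 * (s • (1 : Matrix (Fin n) (Fin n) ℂ) - Ahat)⁻¹ * B0) 0 0 ≠ 0 := by
  set M : Matrix (Fin n) (Fin n) ℂ := s • (1 : Matrix (Fin n) (Fin n) ℂ) - Ahat with hM
  haveI : Invertible M := invertibleOfIsUnitDet M (isUnit_iff_ne_zero.mpr hdet1)
  have hblock : fromBlocks (s • (1 : Matrix (Fin n) (Fin n) ℂ) - A0) B0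
      C0 (0 : Matrix (Fin 1) (Fin 1) ℂ)
      = fromBlocks M B0 C0 0 * fromBlocks 1 0 (-F0) 1 := by
    rw [fromBlocks_multiply]
    congr 1 <;> simp [hM, hAhat] <;> noncomm_ring
  have hdet3 : (fromBlocks M B0 C0 (0 : Matrix (Fin 1) (Fin 1) ℂ)).det ≠ 0 := by
    intro h
    apply hdet2
    rw [hblock, det_mul, h, zero_mul]
  rw [det_fromBlocks₁₁] at hdet3
  have h1 : ⅟ M = M⁻¹ := invOf_eq_nonsing_inv M
  rw [h1] at hdet3
  have h2 : ((0 : Matrix (Fin 1) (Fin 1) ℂ) - C0 * M⁻¹ * B0).det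
      = -(C0 * M⁻¹ * B0) 0 0 := by
    rw [det_fin_one]
    simp
  intro hzero
  apply hdet3
  rw [h2, hzero, neg_zero, mul_zero]
end

section
/- Let $s\in\mathbb{C}$, $q_1,q_2>0$, $c_1,c_2,p,q\in\mathbb{R}$, and $\xi\in\mathbb{C}$. Suppose $\alpha,\beta:\mathbb{R}\to\mathbb{C}$ are differentiable on $[0,1]$ and satisfy $s\,\alpha(x) = -q_1\alpha'(x) - c_1\alpha(x)$ and $s\,\beta(x) = q_2\beta'(x) - c_2\beta(x)$ for all $x\in[0,1]$, together with the boundary conditions $\alpha(0) = p\,\beta(0) + \xi$ and $\beta(1) = q\,\alpha(1)$. Then, with $h(s) = 1 - pq\, e^{-(\frac{c_2}{q_2}+\frac{c_1}{q_1})}\, e^{-(\frac{1}{q_2}+\frac{1}{q_1})s}$, for all $x\in[0,1]$: $h(s)\,\alpha(x) = e^{-\frac{(c_1+s)}{q_1}x}\,\xi$ and $h(s)\,\beta(x) = q\, e^{-\frac{(c_2+s)}{q_2}(1-x) - \frac{(c_1+s)}{q_1}}\,\xi$. -/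
open Complex in
lemma my_solve_exp (k : ℂ) (f : ℝ → ℂ)
    (hf : ∀ x ∈ Set.Icc (0:ℝ) 1, HasDerivAt f (k * f x) x) :
    ∀ x ∈ Set.Icc (0:ℝ) 1, f x = Complex.exp (k * x) * f 0 := by
  set g : ℝ → ℂ := fun x => Complex.exp (-k * x) * f x with hg
  have hgd : ∀ x ∈ Set.Icc (0:ℝ) 1, HasDerivAt g 0 x := by
    intro x hx
    have h0 : HasDerivAt (fun y : ℝ => (-k) * (y : ℂ)) (-k) x := by
      simpa using (Complex.ofRealCLM.hasDerivAt (x := x)).const_mul (-k)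
    have h1 : HasDerivAt g (Complex.exp (-k * x) * -k * f x + Complex.exp (-k * x) * (k * f x)) x :=
      (h0.cexp).mul (hf x hx)
    convert h1 using 1
    ring
  have hgc : ContinuousOn g (Set.Icc 0 1) := fun x hx =>
    ((hgd x hx).continuousAt).continuousWithinAt
  have := constant_of_has_deriv_right_zero hgc
    (fun x hx => ((hgd x (Set.mem_Icc_of_Ico hx)).hasDerivWithinAt))
  intro x hx
  have h2 := this x hx
  simp only [hg] at h2
  have h3 : Complex.exp (-k * (0:ℝ)) * f 0 = f 0 := by norm_num
  rw [h3] at h2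
  have := congrArg (fun z => Complex.exp (k * x) * z) h2
  simpa [← Complex.exp_add, mul_comm, mul_assoc, mul_left_comm] using this

/-- Frequency-domain solution of the `2×2` cascade of transport PDEs on `[0,1]`:
`h(s) α(x) = e^{-(c₁+s)x/q₁} ξ` and `h(s) β(x) = q e^{-(c₂+s)(1-x)/q₂ - (c₁+s)/q₁} ξ`. -/
theorem stmt8 (s : ℂ) (q1 q2 c1 c2 p q : ℝ) (hq1 : 0 < q1) (hq2 : 0 < q2) (ξ : ℂ)
    (α β : ℝ → ℂ)
    (hαd : ∀ x ∈ Set.Icc (0 : ℝ) 1, DifferentiableAt ℝ α x)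
    (hβd : ∀ x ∈ Set.Icc (0 : ℝ) 1, DifferentiableAt ℝ β x)
    (hα : ∀ x ∈ Set.Icc (0 : ℝ) 1,
      s * α x = -(q1 : ℂ) * deriv α x - (c1 : ℂ) * α x)
    (hβ : ∀ x ∈ Set.Icc (0 : ℝ) 1,
      s * β x = (q2 : ℂ) * deriv β x - (c2 : ℂ) * β x)
    (hbc0 : α 0 = (p : ℂ) * β 0 + ξ) (hbc1 : β 1 = (q : ℂ) * α 1) :
    ∀ x ∈ Set.Icc (0 : ℝ) 1,
      ((1 : ℂ) - ((p * q : ℝ) : ℂ) * Complex.exp (-((c2 / q2 + c1 / q1 : ℝ) : ℂ)) *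
          Complex.exp (-((1 / q2 + 1 / q1 : ℝ) : ℂ) * s)) * α x
        = Complex.exp (-(((c1 : ℂ) + s) / (q1 : ℂ)) * (x : ℂ)) * ξ ∧
      ((1 : ℂ) - ((p * q : ℝ) : ℂ) * Complex.exp (-((c2 / q2 + c1 / q1 : ℝ) : ℂ)) *
          Complex.exp (-((1 / q2 + 1 / q1 : ℝ) : ℂ) * s)) * β x
        = (q : ℂ) * Complex.exp (-(((c2 : ℂ) + s) / (q2 : ℂ)) * (1 - (x : ℂ))
            - ((c1 : ℂ) + s) / (q1 : ℂ)) * ξ := by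
  have hq1' : (q1:ℂ) ≠ 0 := by exact_mod_cast hq1.ne'
  have hq2' : (q2:ℂ) ≠ 0 := by exact_mod_cast hq2.ne'
  set ka : ℂ := -(((c1:ℂ) + s) / (q1:ℂ)) with hka
  set kb : ℂ := ((c2:ℂ) + s) / (q2:ℂ) with hkb
  have hαs : ∀ x ∈ Set.Icc (0:ℝ) 1, α x = Complex.exp (ka * x) * α 0 := by
    apply my_solve_exp
    intro x hx
    have hD : deriv α x = ka * α x := by
      have h := hα x hx
      rw [hka]
      field_simp
      linear_combination h
    have := (hαd x hx).hasDerivAt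
    rwa [hD] at this
  have hβs : ∀ x ∈ Set.Icc (0:ℝ) 1, β x = Complex.exp (kb * x) * β 0 := by
    apply my_solve_exp
    intro x hx
    have hD : deriv β x = kb * β x := by
      have h := hβ x hx
      rw [hkb]
      field_simp
      linear_combination -h
    have := (hβd x hx).hasDerivAt
    rwa [hD] at this
  set H : ℂ := (1 : ℂ) - ((p * q : ℝ) : ℂ) * Complex.exp (-((c2 / q2 + c1 / q1 : ℝ) : ℂ)) *
      Complex.exp (-((1 / q2 + 1 / q1 : ℝ) : ℂ) * s) with hH
  have hHeq : H = 1 - (p:ℂ) * (q:ℂ) * Complex.exp (ka - kb) := by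
    rw [hH, mul_assoc, ← Complex.exp_add]
    push_cast
    rw [show (-((c2:ℂ)/(q2:ℂ) + (c1:ℂ)/(q1:ℂ)) + -(1/(q2:ℂ) + 1/(q1:ℂ)) * s) = ka - kb from by
      rw [hka, hkb]; field_simp; ring]
  -- boundary relations
  have h0mem : (0:ℝ) ∈ Set.Icc (0:ℝ) 1 := by norm_num
  have h1mem : (1:ℝ) ∈ Set.Icc (0:ℝ) 1 := by norm_num
  have hb0 : β 0 = (q:ℂ) * Complex.exp (ka - kb) * α 0 := by
    have e1 : Complex.exp kb * β 0 = (q:ℂ) * Complex.exp ka * α 0 := by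
      have e := hbc1
      rw [hβs 1 h1mem, hαs 1 h1mem] at e
      push_cast at e
      rw [mul_one, mul_one] at e
      rw [e]; ring
    have hne : Complex.exp kb ≠ 0 := Complex.exp_ne_zero _
    rw [Complex.exp_sub]
    field_simp
    linear_combination e1
  have hα0 : H * α 0 = ξ := by
    rw [hHeq]
    have := hbc0
    rw [hb0] at this
    linear_combination this
  intro x hx
  constructor
  · rw [hαs x hx]
    calc H * (Complex.exp (ka * x) * α 0) = Complex.exp (ka * x) * (H * α 0) := by ring
    _ = Complex.exp (ka * x) * ξ := by rw [hα0]
    _ = _ := by rw [hka]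
  · rw [hβs x hx, hb0]
    have : H * (Complex.exp (kb * x) * ((q:ℂ) * Complex.exp (ka - kb) * α 0))
        = (q:ℂ) * (Complex.exp (kb * x) * Complex.exp (ka - kb)) * (H * α 0) := by ring
    rw [this, hα0, ← Complex.exp_add]
    rw [show -(((c2:ℂ) + s) / (q2:ℂ)) * (1 - (x:ℂ)) - ((c1:ℂ) + s) / (q1:ℂ)
        = kb * x + (ka - kb) from by rw [hka, hkb]; field_simp; ring]
end

section
/- Let $s\in\mathbb{C}$ with $\mathrm{Re}(s)\ge 0$, let $q_1,q_2>0$, $c_1,c_2,p,q\in\mathbb{R}$, $\tau>0$, and $\xi\in\mathbb{C}$. Suppose $\alpha,\beta:\mathbb{R}\to\mathbb{C}$ are differentiable on $[0,1]$ satisfying $s\,\alpha(x) = -q_1\alpha'(x) - c_1\alpha(x)$, $s\,\beta(x) = q_2\beta'(x) - c_2\beta(x)$ on $[0,1]$, $\alpha(0) = p\beta(0)+\xi$, $\beta(1) = q\alpha(1)$. Let $\hat A_1$ be an $m\times m$ complex matrix all of whose eigenvalues have negative real part, $B_1$ an $m\times 1$ complex matrix, $C_1$ a $1\times m$ complex matrix,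 and $\hat Y\in\mathbb{C}^m$ with $(sI-\hat A_1)\hat Y = B_1\alpha(1)$. Suppose further $v:\mathbb{R}\to\mathbb{C}$ is differentiable on $[1,2]$ with $s\,v(x) = -\tfrac{1}{\tau}v'(x)$ on $[1,2]$ and $v(1) = C_1\hat Y$. Then, with $h(s) = 1 - pq\, e^{-(\frac{c_2}{q_2}+\frac{c_1}{q_1})}\, e^{-(\frac{1}{q_2}+\frac{1}{q_1})s}$: $h(s)\,\hat Y = (sI-\hat A_1)^{-1}B_1\, e^{-\frac{(c_1+s)}{q_1}}\,\xi$ and $h(s)\,v(x) = C_1(sI-\hat A_1)^{-1}B_1\, e^{-\frac{(c_1+s)}{q_1}}\, e^{-\tau(x-1)s}\,\xi$ for all $x\in[1,2]$. -/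
open Matrix

lemma ode_exp_sol {f : ℝ → ℂ} {k : ℂ} {a b : ℝ} (hab : a < b)
    (hd : ∀ x ∈ Set.Icc a b, DifferentiableAt ℝ f x)
    (hf : ∀ x ∈ Set.Icc a b, deriv f x = k * f x) :
    ∀ x ∈ Set.Icc a b, f x = f a * Complex.exp (k * (x - a)) := by
  set g : ℝ → ℂ := fun x => f x * Complex.exp (-(k * x)) with hg
  have hexp : ∀ x : ℝ, HasDerivAt (fun y : ℝ => Complex.exp (-(k * y)))
      (Complex.exp (-(k * x)) * (-k)) x := by
    intro x
    have h1 : HasDerivAt (fun y : ℝ => -(k * (y : ℂ))) (-k) x := by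
      have h := ((Complex.ofRealCLM.hasDerivAt (x := x)).const_mul k).neg
      simp only [Complex.ofRealCLM_apply, Complex.ofReal_one, mul_one] at h
      exact h
    simpa using h1.cexp
  have hg0 : ∀ x ∈ Set.Icc a b, HasDerivAt g 0 x := by
    intro x hx
    have : HasDerivAt g (deriv f x * Complex.exp (-(k * x)) + f x * (Complex.exp (-(k * x)) * (-k))) x :=
      ((hd x hx).hasDerivAt.mul (hexp x))
    rw [hf x hx] at this
    convert this using 1
    ring
  have hconst := constant_of_derivWithin_zero (f := g) (a := a) (b := b)
    (fun x hx => (hg0 x hx).differentiableAt.differentiableWithinAt)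
    (fun x hx => by
      rw [(hg0 x (Set.mem_Icc_of_Ico hx)).differentiableAt.derivWithin
        (uniqueDiffOn_Icc hab x (Set.mem_Icc_of_Ico hx))]
      exact (hg0 x (Set.mem_Icc_of_Ico hx)).deriv)
  intro x hx
  have h := hconst x hx
  simp only [hg] at h
  have hx2 : f x = (f x * Complex.exp (-(k * x))) * Complex.exp (k * x) := by
    rw [mul_assoc, ← Complex.exp_add]; simp
  rw [hx2, h, mul_assoc, ← Complex.exp_add]
  congr 1
  ring

/-- Frequency-domain solution of the full cascade: transport PDEs `α, β` on `[0,1]`,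
driving a Hurwitz ODE `(sI - Â₁) Ŷ = B₁ α(1)`, whose output feeds the sensor-delay
transport PDE `v` on `[1,2]`. Then `h(s) Ŷ = (sI-Â₁)⁻¹ B₁ e^{-(c₁+s)/q₁} ξ` and
`h(s) v(x) = C₁ (sI-Â₁)⁻¹ B₁ e^{-(c₁+s)/q₁} e^{-τ(x-1)s} ξ`. -/
theorem stmt9 (m : ℕ) (s : ℂ) (hs : 0 ≤ s.re)
    (q1 q2 c1 c2 p q τ : ℝ) (hq1 : 0 < q1) (hq2 : 0 < q2) (hτ : 0 < τ) (ξ : ℂ)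
    (α β : ℝ → ℂ)
    (hαd : ∀ x ∈ Set.Icc (0 : ℝ) 1, DifferentiableAt ℝ α x)
    (hβd : ∀ x ∈ Set.Icc (0 : ℝ) 1, DifferentiableAt ℝ β x)
    (hα : ∀ x ∈ Set.Icc (0 : ℝ) 1,
      s * α x = -(q1 : ℂ) * deriv α x - (c1 : ℂ) * α x)
    (hβ : ∀ x ∈ Set.Icc (0 : ℝ) 1,
      s * β x = (q2 : ℂ) * deriv β x - (c2 : ℂ) * β x)
    (hbc0 : α 0 = (p : ℂ) * β 0 + ξ) (hbc1 : β 1 = (q : ℂ) * α 1)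
    (A1hat : Matrix (Fin m) (Fin m) ℂ)
    (hHurwitz : ∀ μ ∈ spectrum ℂ A1hat, μ.re < 0)
    (B1 : Matrix (Fin m) (Fin 1) ℂ) (C1 : Matrix (Fin 1) (Fin m) ℂ)
    (Yhat : Fin m → ℂ)
    (hY : (s • (1 : Matrix (Fin m) (Fin m) ℂ) - A1hat) *ᵥ Yhat
      = fun i => B1 i 0 * α 1)
    (v : ℝ → ℂ)
    (hvd : ∀ x ∈ Set.Icc (1 : ℝ) 2, DifferentiableAt ℝ v x)
    (hv : ∀ x ∈ Set.Icc (1 : ℝ) 2, s * v x = -(1 / (τ : ℂ)) * deriv v x)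
    (hv1 : v 1 = (C1 *ᵥ Yhat) 0) :
    ((1 : ℂ) - ((p * q : ℝ) : ℂ) * Complex.exp (-((c2 / q2 + c1 / q1 : ℝ) : ℂ)) *
        Complex.exp (-((1 / q2 + 1 / q1 : ℝ) : ℂ) * s)) • Yhat
      = (s • (1 : Matrix (Fin m) (Fin m) ℂ) - A1hat)⁻¹ *ᵥ
          (fun i => B1 i 0 * (Complex.exp (-(((c1 : ℂ) + s) / (q1 : ℂ))) * ξ)) ∧
    ∀ x ∈ Set.Icc (1 : ℝ) 2,
      ((1 : ℂ) - ((p * q : ℝ) : ℂ) * Complex.exp (-((c2 / q2 + c1 / q1 : ℝ) : ℂ)) *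
          Complex.exp (-((1 / q2 + 1 / q1 : ℝ) : ℂ) * s)) * v x
        = (C1 * (s • (1 : Matrix (Fin m) (Fin m) ℂ) - A1hat)⁻¹ * B1) 0 0 *
            Complex.exp (-(((c1 : ℂ) + s) / (q1 : ℂ))) *
            Complex.exp (-(τ : ℂ) * ((x : ℂ) - 1) * s) * ξ := by
  have hq1c : (q1 : ℂ) ≠ 0 := Complex.ofReal_ne_zero.2 hq1.ne'
  have hq2c : (q2 : ℂ) ≠ 0 := Complex.ofReal_ne_zero.2 hq2.ne'
  have hτc : (τ : ℂ) ≠ 0 := Complex.ofReal_ne_zero.2 hτ.ne'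
  set H : ℂ := (1 : ℂ) - ((p * q : ℝ) : ℂ) * Complex.exp (-((c2 / q2 + c1 / q1 : ℝ) : ℂ)) *
        Complex.exp (-((1 / q2 + 1 / q1 : ℝ) : ℂ) * s) with hH
  set E1 : ℂ := Complex.exp (-(((c1 : ℂ) + s) / (q1 : ℂ))) with hE1
  set M : Matrix (Fin m) (Fin m) ℂ := s • (1 : Matrix (Fin m) (Fin m) ℂ) - A1hat with hM
  -- solve α
  have hα' : ∀ x ∈ Set.Icc (0 : ℝ) 1, deriv α x = (-(s + c1) / q1) * α x := by
    intro x hx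
    have h := hα x hx
    rw [div_mul_eq_mul_div, eq_div_iff hq1c]
    linear_combination h
  have hαsol := ode_exp_sol one_pos hαd hα'
  -- solve β
  have hβ' : ∀ x ∈ Set.Icc (0 : ℝ) 1, deriv β x = ((s + c2) / q2) * β x := by
    intro x hx
    have h := hβ x hx
    rw [div_mul_eq_mul_div, eq_div_iff hq2c]
    linear_combination -h
  have hβsol := ode_exp_sol one_pos hβd hβ'
  -- α at 1
  have hα1 : α 1 = α 0 * E1 := by
    have := hαsol 1 (by norm_num)
    rw [this, hE1]
    congr 1
    push_cast
    ring
  have hβ1 : β 1 = β 0 * Complex.exp ((s + c2) / q2) := by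
    have := hβsol 1 (by norm_num)
    rw [this]
    congr 1
    push_cast
    ring
  -- key exponential identity
  have hE : Complex.exp (-((c2 / q2 + c1 / q1 : ℝ) : ℂ)) *
        Complex.exp (-((1 / q2 + 1 / q1 : ℝ) : ℂ) * s)
      = E1 * Complex.exp (-((s + (c2 : ℂ)) / (q2 : ℂ))) := by
    rw [hE1, ← Complex.exp_add, ← Complex.exp_add]
    congr 1
    push_cast
    field_simp
    ring
  have hexpkey : ((p * q : ℝ) : ℂ) * Complex.exp (-((c2 / q2 + c1 / q1 : ℝ) : ℂ)) *
        Complex.exp (-((1 / q2 + 1 / q1 : ℝ) : ℂ) * s)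
      = (p : ℂ) * q * (E1 * Complex.exp (-((s + c2) / q2))) := by
    rw [show ((p * q : ℝ) : ℂ) = (p : ℂ) * q from by push_cast; ring, mul_assoc, hE]
  -- β 0 in terms of α 0
  have hβ0 : β 0 = (q : ℂ) * α 0 * E1 * Complex.exp (-((s + c2) / q2)) := by
    have h1 : β 0 * Complex.exp ((s + c2) / q2) = (q : ℂ) * (α 0 * E1) := by
      rw [← hβ1, ← hα1, hbc1]
    have hne : Complex.exp ((s + c2) / q2) ≠ 0 := Complex.exp_ne_zero _
    have h2 : Complex.exp (-((s + c2) / q2)) * Complex.exp ((s + c2) / q2) = 1 := by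
      rw [← Complex.exp_add]; simp
    calc β 0 = β 0 * Complex.exp ((s + c2) / q2) * Complex.exp (-((s + c2) / q2)) := by
            rw [mul_assoc]; rw [mul_comm (Complex.exp _)] at h2; rw [h2, mul_one]
      _ = (q : ℂ) * α 0 * E1 * Complex.exp (-((s + c2) / q2)) := by rw [h1]; ring
  -- H α 0 = ξ
  have hHα0 : H * α 0 = ξ := by
    rw [hH]
    have := hbc0
    rw [hβ0] at this
    linear_combination this - α 0 * hexpkey
  have hHα1 : H * α 1 = E1 * ξ := by
    rw [hα1]
    linear_combination E1 * hHα0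
  -- invertibility
  have hUnit : IsUnit M := by
    by_contra hcon
    have : s ∈ spectrum ℂ A1hat := by
      rw [spectrum.mem_iff]
      rwa [Algebra.algebraMap_eq_smul_one]
    exact absurd hs (not_le.2 (hHurwitz s this))
  have hdet : IsUnit M.det := (Matrix.isUnit_iff_isUnit_det M).1 hUnit
  have hinv : M⁻¹ * M = 1 := Matrix.nonsing_inv_mul M hdet
  -- first conclusion
  have key1 : H • Yhat = M⁻¹ *ᵥ (fun i => B1 i 0 * (E1 * ξ)) := by
    have h1 : (fun i => B1 i 0 * (E1 * ξ)) = M *ᵥ (H • Yhat) := by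
      funext i
      rw [Matrix.mulVec_smul, hY]
      simp only [Pi.smul_apply, smul_eq_mul]
      linear_combination -B1 i 0 * hHα1
    rw [h1, Matrix.mulVec_mulVec, hinv, Matrix.one_mulVec]
  refine ⟨key1, ?_⟩
  -- v part
  intro x hx
  have hv' : ∀ y ∈ Set.Icc (1 : ℝ) 2, deriv v y = (-(τ : ℂ) * s) * v y := by
    intro y hy
    have h := hv y hy
    field_simp at h
    linear_combination h
  have hvsol := ode_exp_sol one_lt_two hvd hv' x hx
  have hvexp : Complex.exp (-(τ : ℂ) * s * ((x : ℂ) - ((1 : ℝ) : ℂ)))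
      = Complex.exp (-(τ : ℂ) * ((x : ℂ) - 1) * s) := by
    congr 1; push_cast; ring
  have hHv1 : H * v 1 = (C1 * M⁻¹ * B1) 0 0 * (E1 * ξ) := by
    rw [hv1]
    have h1 : H * (C1 *ᵥ Yhat) 0 = (C1 *ᵥ (H • Yhat)) 0 := by
      rw [Matrix.mulVec_smul]; simp
    rw [h1, key1]
    have h2 : (fun i => B1 i 0 * (E1 * ξ)) = B1 *ᵥ (fun _ => E1 * ξ) := by
      funext i
      simp [Matrix.mulVec, dotProduct]
    rw [h2, Matrix.mulVec_mulVec, Matrix.mulVec_mulVec]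
    simp [Matrix.mulVec, dotProduct]
  rw [hvsol, hvexp]
  linear_combination Complex.exp (-(τ : ℂ) * ((x : ℂ) - 1) * s) * hHv1
end
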